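/- There exists an LTAG₀ grammar (with adjunction nodes restricted to the path from the lexical leaf to the root) generating the counting-dependency language { aⁿ bⁿ cⁿ : n ≥ 1 }. -/
import Mathlib


/-- Node labels of LTAG₀ trees: terminals, substitution leaves A↓, substitution
nonterminals, adjunction-marked nodes (T), unmarked adjunction nonterminals and
foot nodes T*. -/
inductive Lab (T NS NA : Type) where
  | term : T → Lab T NS NA        -- terminal leaf
  | substLeaf : NS → Lab T NS NA  -- A↓, awaiting substitution
  | nonterm : NS → Lab T NS NA    -- substitution nonterminal (root/internal)
  | adj : NA → Lab T NS NA        -- (T), adjunction allowed here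
  | anode : NA → Lab T NS NA      -- adjunction nonterminal, no adjunction mark
  | foot : NA → Lab T NS NA       -- T*, foot node of an auxiliary tree

/-- Finitely branching labelled trees. -/
inductive LTree (T NS NA : Type) where
  | node : Lab T NS NA → List (LTree T NS NA) → LTree T NS NA

namespace LTree

variable {T NS NA : Type}

def rootLabel : LTree T NS NA → Lab T NS NA
  | .node l _ => l

mutual
  /-- The yield of a tree: the sequence of terminals at its leaves. -/
  def yield : LTree T NS NA → List T
    | .node (.term a) _ => [a]
    | .node (.substLeaf _) cs => yields cs
    | .node (.nonterm _) cs => yields cs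
    | .node (.adj _) cs => yields cs
    | .node (.anode _) cs => yields cs
    | .node (.foot _) cs => yields cs
  def yields : List (LTree T NS NA) → List T
    | [] => []
    | t :: ts => yield t ++ yields ts
end

mutual
  /-- The number of terminal leaves of a tree. -/
  def termCount : LTree T NS NA → ℕ
    | .node (.term _) _ => 1
    | .node (.substLeaf _) cs => termCounts cs
    | .node (.nonterm _) cs => termCounts cs
    | .node (.adj _) cs => termCounts cs
    | .node (.anode _) cs => termCounts cs
    | .node (.foot _) cs => termCounts cs
  def termCounts : List (LTree T NS NA) → ℕ
    | [] => 0
    | t :: ts => termCount t + termCounts ts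
end

mutual
  /-- The number of foot nodes of a tree. -/
  def footCount : LTree T NS NA → ℕ
    | .node (.foot _) cs => 1 + footCounts cs
    | .node (.term _) cs => footCounts cs
    | .node (.substLeaf _) cs => footCounts cs
    | .node (.nonterm _) cs => footCounts cs
    | .node (.adj _) cs => footCounts cs
    | .node (.anode _) cs => footCounts cs
  def footCounts : List (LTree T NS NA) → ℕ
    | [] => 0
    | t :: ts => footCount t + footCounts ts
end

mutual
  /-- A tree is complete when all of its leaves are terminal leaves. -/
  def Complete : LTree T NS NA → Prop
    | .node (.term _) cs => cs = []
    | .node (.substLeaf _) _ => False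
    | .node (.foot _) _ => False
    | .node (.nonterm _) cs => cs ≠ [] ∧ CompleteList cs
    | .node (.adj _) cs => cs ≠ [] ∧ CompleteList cs
    | .node (.anode _) cs => cs ≠ [] ∧ CompleteList cs
  def CompleteList : List (LTree T NS NA) → Prop
    | [] => True
    | t :: ts => Complete t ∧ CompleteList ts
end

/-- The subtree relation. -/
inductive Subtree : LTree T NS NA → LTree T NS NA → Prop
  | refl (t : LTree T NS NA) : Subtree t t
  | child {s u : LTree T NS NA} (l : Lab T NS NA) (cs : List (LTree T NS NA)) :
      u ∈ cs → Subtree s u → Subtree s (.node l cs)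

/-- Substitution of the tree β (with root label `nonterm A`) for one
substitution leaf A↓. -/
inductive ReplaceSubst (β : LTree T NS NA) (A : NS) :
    LTree T NS NA → LTree T NS NA → Prop
  | here : rootLabel β = .nonterm A → ReplaceSubst β A (.node (.substLeaf A) []) β
  | step (l : Lab T NS NA) (pre post : List (LTree T NS NA)) {t t' : LTree T NS NA} :
      ReplaceSubst β A t t' →
      ReplaceSubst β A (.node l (pre ++ t :: post)) (.node l (pre ++ t' :: post))

/-- Replacement of the foot node n* by the tree `sub`. -/
inductive FootReplace (n : NA) (sub : LTree T NS NA) :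
    LTree T NS NA → LTree T NS NA → Prop
  | here : FootReplace n sub (.node (.foot n) []) sub
  | step (l : Lab T NS NA) (pre post : List (LTree T NS NA)) {t t' : LTree T NS NA} :
      FootReplace n sub t t' →
      FootReplace n sub (.node l (pre ++ t :: post)) (.node l (pre ++ t' :: post))

/-- Adjunction of the auxiliary(-derived) tree β (root `anode n`, with a foot
node n*) at one node marked (n): the marked node is replaced by β, and the
original subtree below the node is spliced in at the foot of β. -/
inductive Adjoin (β : LTree T NS NA) : LTree T NS NA → LTree T NS NA → Prop
  | here (n : NA) (cs : List (LTree T NS NA)) {β' : LTree T NS NA} :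
      rootLabel β = .anode n →
      FootReplace n (.node (.anode n) cs) β β' →
      Adjoin β (.node (.adj n) cs) β'
  | step (l : Lab T NS NA) (pre post : List (LTree T NS NA)) {t t' : LTree T NS NA} :
      Adjoin β t t' →
      Adjoin β (.node l (pre ++ t :: post)) (.node l (pre ++ t' :: post))

end LTree

/-- An LTAG₀ grammar: a start symbol, initial trees and auxiliary trees. -/
structure LTAG0 (T NS NA : Type) where
  start : NS
  initial : Set (LTree T NS NA)
  auxTrees : Set (LTree T NS NA)

namespace LTAG0

variable {T NS NA : Type} (g : LTAG0 T NS NA)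

/-- Well-formedness of an LTAG₀ grammar: finitely many elementary trees; every
elementary tree has exactly one terminal leaf; initial trees are rooted in
substitution nonterminals and have no foot node; every auxiliary tree is rooted
in an adjunction nonterminal and has exactly one foot node, labelled by the
same adjunction nonterminal as its root; and every adjunction node lies on the
path from the terminal leaf to the root (i.e. every subtree rooted at an
adjunction mark contains the terminal leaf). -/
def WellFormed : Prop :=
  g.initial.Finite ∧ g.auxTrees.Finite ∧
  (∀ t ∈ g.initial ∪ g.auxTrees, LTree.termCount t = 1) ∧
  (∀ t ∈ g.initial, (∃ A : NS, LTree.rootLabel t = .nonterm A) ∧ LTree.footCount t = 0) ∧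
  (∀ t ∈ g.auxTrees, ∃ n : NA, LTree.rootLabel t = .anode n ∧ LTree.footCount t = 1 ∧
      ∀ u, LTree.Subtree u t → ∀ m : NA, LTree.rootLabel u = .foot m → m = n) ∧
  (∀ t ∈ g.initial ∪ g.auxTrees, ∀ u, LTree.Subtree u t →
      (∃ n : NA, LTree.rootLabel u = .adj n) → 1 ≤ LTree.termCount u)

/-- Derived trees: elementary trees closed under substitution and adjunction. -/
inductive Derived : LTree T NS NA → Prop
  | init {t} : t ∈ g.initial → Derived t
  | auxMem {t} : t ∈ g.auxTrees → Derived t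
  | subst {t β t'} (A : NS) : Derived t → Derived β →
      LTree.ReplaceSubst β A t t' → Derived t'
  | adjoin {t β t'} : Derived t → Derived β →
      LTree.Adjoin β t t' → Derived t'

/-- The language generated by an LTAG₀ grammar: the yields of complete derived
trees rooted in the start symbol. -/
def language : Set (List T) :=
  {w | ∃ t, g.Derived t ∧ LTree.rootLabel t = .nonterm g.start ∧
        LTree.Complete t ∧ LTree.yield t = w}

end LTAG0

namespace Cnt

open LTree

abbrev CL := LTree (Fin 3) (Fin 3) Unit

def aLeaf : CL := .node (.term 0) []
def bLeaf : CL := .node (.term 1) []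
def cLeaf : CL := .node (.term 2) []
def lA : CL := .node (.substLeaf 1) []
def lC : CL := .node (.substLeaf 2) []
def ta : CL := .node (.nonterm 1) [aLeaf]
def tc : CL := .node (.nonterm 2) [cLeaf]
def ftN : CL := .node (.foot ()) []
def alphaT : CL := .node (.nonterm 0) [lA, .node (.adj ()) [bLeaf], lC]
def betaT : CL := .node (.anode ()) [lA, .node (.adj ()) [ftN, bLeaf], lC]

def G : LTAG0 (Fin 3) (Fin 3) Unit := ⟨0, {alphaT, ta, tc}, {betaT}⟩

/-- list splitting helpers -/
lemma split1 {α : Type*} {pre post : List α} {u x : α}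
    (h : pre ++ u :: post = [x]) : pre = [] ∧ u = x ∧ post = [] := by
  rcases pre with _ | ⟨a, pre⟩ <;> simp_all

lemma split2 {α : Type*} {pre post : List α} {u x y : α}
    (h : pre ++ u :: post = [x, y]) :
    (pre = [] ∧ u = x ∧ post = [y]) ∨ (pre = [x] ∧ u = y ∧ post = []) := by
  rcases pre with _ | ⟨a, _ | ⟨b, pre⟩⟩ <;> simp_all

lemma split3 {α : Type*} {pre post : List α} {u x y z : α}
    (h : pre ++ u :: post = [x, y, z]) :
    (pre = [] ∧ u = x ∧ post = [y, z]) ∨ (pre = [x] ∧ u = y ∧ post = [z]) ∨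
      (pre = [x, y] ∧ u = z ∧ post = []) := by
  rcases pre with _ | ⟨a, _ | ⟨b, _ | ⟨c, pre⟩⟩⟩ <;> simp_all

/-- inversion lemmas -/
lemma rs_inv {β : CL} {A : Fin 3} {l : Lab (Fin 3) (Fin 3) Unit} {cs : List CL} {t' : CL}
    (h : ReplaceSubst β A (.node l cs) t') :
    (l = .substLeaf A ∧ cs = [] ∧ rootLabel β = .nonterm A ∧ t' = β) ∨
      ∃ pre u post u', cs = pre ++ u :: post ∧ ReplaceSubst β A u u' ∧
        t' = .node l (pre ++ u' :: post) := by
  cases h with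
  | here h => exact Or.inl ⟨rfl, rfl, h, rfl⟩
  | step l pre post h => exact Or.inr ⟨pre, _, post, _, rfl, h, rfl⟩

lemma fr_inv {n : Unit} {sub : CL} {l : Lab (Fin 3) (Fin 3) Unit} {cs : List CL} {t' : CL}
    (h : FootReplace n sub (.node l cs) t') :
    (l = .foot n ∧ cs = [] ∧ t' = sub) ∨
      ∃ pre u post u', cs = pre ++ u :: post ∧ FootReplace n sub u u' ∧
        t' = .node l (pre ++ u' :: post) := by
  cases h with
  | here => exact Or.inl ⟨rfl, rfl, rfl⟩
  | step l pre post h => exact Or.inr ⟨pre, _, post, _, rfl, h, rfl⟩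

lemma adj_inv {β : CL} {l : Lab (Fin 3) (Fin 3) Unit} {cs : List CL} {t' : CL}
    (h : Adjoin β (.node l cs) t') :
    (∃ n, l = .adj n ∧ rootLabel β = .anode n ∧
        FootReplace n (.node (.anode n) cs) β t') ∨
      ∃ pre u post u', cs = pre ++ u :: post ∧ Adjoin β u u' ∧
        t' = .node l (pre ++ u' :: post) := by
  cases h with
  | here n cs h hf => exact Or.inl ⟨n, rfl, h, hf⟩
  | step l pre post h => exact Or.inr ⟨pre, _, post, _, rfl, h, rfl⟩

end Cnt
namespace Cnt
open LTree

/-- the spine pieces -/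
def gpart : ℕ → CL
  | 0 => .node (.anode ()) [bLeaf]
  | k + 1 => .node (.anode ()) [gpart k, bLeaf]

def fpart : ℕ → CL
  | 0 => ftN
  | k + 1 => .node (.anode ()) [fpart k, bLeaf]

def XA (t : CL) : Prop := t = lA ∨ t = ta
def XC (t : CL) : Prop := t = lC ∨ t = tc

inductive MidF : ℕ → CL → Prop
  | core (k) : MidF k (.node (.adj ()) [fpart k, bLeaf])
  | wrap {k x m y} : XA x → XC y → MidF (k + 1) m → MidF k (.node (.anode ()) [x, m, y])

inductive MidG : ℕ → CL → Prop
  | base : MidG 0 (.node (.adj ()) [bLeaf])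
  | core (k) : MidG (k + 1) (.node (.adj ()) [gpart k, bLeaf])
  | wrap {k x m y} : XA x → XC y → MidG (k + 1) m → MidG k (.node (.anode ()) [x, m, y])

def Inv (t : CL) : Prop :=
  t = ta ∨ t = tc ∨
    (∃ x m y, XA x ∧ MidF 0 m ∧ XC y ∧ t = .node (.anode ()) [x, m, y]) ∨
    (∃ x m y, XA x ∧ MidG 0 m ∧ XC y ∧ t = .node (.nonterm 0) [x, m, y])

/-! no-redex lemmas for ReplaceSubst -/

lemma nors_aLeaf {β A t'} : ¬ ReplaceSubst β A aLeaf t' := by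
  intro h; rcases rs_inv h with ⟨h1, _⟩ | ⟨pre, u, post, u', hcs, _, _⟩
  · simp [aLeaf] at h1
  · simp at hcs

lemma nors_bLeaf {β A t'} : ¬ ReplaceSubst β A bLeaf t' := by
  intro h; rcases rs_inv h with ⟨h1, _⟩ | ⟨pre, u, post, u', hcs, _, _⟩
  · simp [bLeaf] at h1
  · simp at hcs

lemma nors_cLeaf {β A t'} : ¬ ReplaceSubst β A cLeaf t' := by
  intro h; rcases rs_inv h with ⟨h1, _⟩ | ⟨pre, u, post, u', hcs, _, _⟩
  · simp [cLeaf] at h1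
  · simp at hcs

lemma nors_ftN {β A t'} : ¬ ReplaceSubst β A ftN t' := by
  intro h; rcases rs_inv h with ⟨h1, _⟩ | ⟨pre, u, post, u', hcs, _, _⟩
  · simp [ftN] at h1
  · simp at hcs

lemma nors_ta {β A t'} : ¬ ReplaceSubst β A ta t' := by
  intro h; rcases rs_inv h with ⟨h1, _⟩ | ⟨pre, u, post, u', hcs, hu, _⟩
  · simp [ta] at h1
  · obtain ⟨rfl, rfl, rfl⟩ := split1 hcs.symm; exact nors_aLeaf hu

lemma nors_tc {β A t'} : ¬ ReplaceSubst β A tc t' := by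
  intro h; rcases rs_inv h with ⟨h1, _⟩ | ⟨pre, u, post, u', hcs, hu, _⟩
  · simp [tc] at h1
  · obtain ⟨rfl, rfl, rfl⟩ := split1 hcs.symm; exact nors_cLeaf hu

lemma nors_gpart : ∀ k {β A t'}, ¬ ReplaceSubst β A (gpart k) t' := by
  intro k
  induction k with
  | zero =>
    intro β A t' h
    rcases rs_inv h with ⟨h1, _⟩ | ⟨pre, u, post, u', hcs, hu, _⟩
    · simp at h1
    · obtain ⟨rfl, rfl, rfl⟩ := split1 hcs.symm; exact nors_bLeaf hu
  | succ k ih =>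
    intro β A t' h
    rcases rs_inv h with ⟨h1, _⟩ | ⟨pre, u, post, u', hcs, hu, _⟩
    · simp at h1
    · rcases split2 hcs.symm with ⟨rfl, rfl, rfl⟩ | ⟨rfl, rfl, rfl⟩
      · exact ih hu
      · exact nors_bLeaf hu

lemma nors_fpart : ∀ k {β A t'}, ¬ ReplaceSubst β A (fpart k) t' := by
  intro k
  induction k with
  | zero => intro β A t' h; exact nors_ftN h
  | succ k ih =>
    intro β A t' h
    rcases rs_inv h with ⟨h1, _⟩ | ⟨pre, u, post, u', hcs, hu, _⟩
    · simp at h1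
    · rcases split2 hcs.symm with ⟨rfl, rfl, rfl⟩ | ⟨rfl, rfl, rfl⟩
      · exact ih hu
      · exact nors_bLeaf hu

/-! no-redex lemmas for FootReplace -/

lemma nofr_aLeaf {n s t'} : ¬ LTree.FootReplace n s aLeaf t' := by
  intro h; rcases fr_inv h with ⟨h1, _⟩ | ⟨pre, u, post, u', hcs, _, _⟩
  · simp [aLeaf] at h1
  · simp at hcs

lemma nofr_bLeaf {n s t'} : ¬ LTree.FootReplace n s bLeaf t' := by
  intro h; rcases fr_inv h with ⟨h1, _⟩ | ⟨pre, u, post, u', hcs, _, _⟩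
  · simp [bLeaf] at h1
  · simp at hcs

lemma nofr_cLeaf {n s t'} : ¬ LTree.FootReplace n s cLeaf t' := by
  intro h; rcases fr_inv h with ⟨h1, _⟩ | ⟨pre, u, post, u', hcs, _, _⟩
  · simp [cLeaf] at h1
  · simp at hcs

lemma nofr_lA {n s t'} : ¬ LTree.FootReplace n s lA t' := by
  intro h; rcases fr_inv h with ⟨h1, _⟩ | ⟨pre, u, post, u', hcs, _, _⟩
  · simp [lA] at h1
  · simp at hcs

lemma nofr_lC {n s t'} : ¬ LTree.FootReplace n s lC t' := by
  intro h; rcases fr_inv h with ⟨h1, _⟩ | ⟨pre, u, post, u', hcs, _, _⟩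
  · simp [lC] at h1
  · simp at hcs

lemma nofr_ta {n s t'} : ¬ LTree.FootReplace n s ta t' := by
  intro h; rcases fr_inv h with ⟨h1, _⟩ | ⟨pre, u, post, u', hcs, hu, _⟩
  · simp [ta] at h1
  · obtain ⟨rfl, rfl, rfl⟩ := split1 hcs.symm; exact nofr_aLeaf hu

lemma nofr_tc {n s t'} : ¬ LTree.FootReplace n s tc t' := by
  intro h; rcases fr_inv h with ⟨h1, _⟩ | ⟨pre, u, post, u', hcs, hu, _⟩
  · simp [tc] at h1
  · obtain ⟨rfl, rfl, rfl⟩ := split1 hcs.symm; exact nofr_cLeaf hu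

lemma nofr_XA {x n s t'} (hx : XA x) : ¬ LTree.FootReplace n s x t' := by
  rcases hx with rfl | rfl
  · exact nofr_lA
  · exact nofr_ta

lemma nofr_XC {y n s t'} (hy : XC y) : ¬ LTree.FootReplace n s y t' := by
  rcases hy with rfl | rfl
  · exact nofr_lC
  · exact nofr_tc

lemma nofr_gpart : ∀ k {n s t'}, ¬ LTree.FootReplace n s (gpart k) t' := by
  intro k
  induction k with
  | zero =>
    intro n s t' h
    rcases fr_inv h with ⟨h1, _⟩ | ⟨pre, u, post, u', hcs, hu, _⟩
    · simp at h1
    · obtain ⟨rfl, rfl, rfl⟩ := split1 hcs.symm; exact nofr_bLeaf hu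
  | succ k ih =>
    intro n s t' h
    rcases fr_inv h with ⟨h1, _⟩ | ⟨pre, u, post, u', hcs, hu, _⟩
    · simp at h1
    · rcases split2 hcs.symm with ⟨rfl, rfl, rfl⟩ | ⟨rfl, rfl, rfl⟩
      · exact ih hu
      · exact nofr_bLeaf hu

/-! no-redex lemmas for Adjoin -/

lemma noadj_aLeaf {β t'} : ¬ LTree.Adjoin β aLeaf t' := by
  intro h; rcases adj_inv h with ⟨n, h1, _⟩ | ⟨pre, u, post, u', hcs, _, _⟩
  · simp [aLeaf] at h1
  · simp at hcs

lemma noadj_bLeaf {β t'} : ¬ LTree.Adjoin β bLeaf t' := by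
  intro h; rcases adj_inv h with ⟨n, h1, _⟩ | ⟨pre, u, post, u', hcs, _, _⟩
  · simp [bLeaf] at h1
  · simp at hcs

lemma noadj_cLeaf {β t'} : ¬ LTree.Adjoin β cLeaf t' := by
  intro h; rcases adj_inv h with ⟨n, h1, _⟩ | ⟨pre, u, post, u', hcs, _, _⟩
  · simp [cLeaf] at h1
  · simp at hcs

lemma noadj_lA {β t'} : ¬ LTree.Adjoin β lA t' := by
  intro h; rcases adj_inv h with ⟨n, h1, _⟩ | ⟨pre, u, post, u', hcs, _, _⟩
  · simp [lA] at h1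
  · simp at hcs

lemma noadj_lC {β t'} : ¬ LTree.Adjoin β lC t' := by
  intro h; rcases adj_inv h with ⟨n, h1, _⟩ | ⟨pre, u, post, u', hcs, _, _⟩
  · simp [lC] at h1
  · simp at hcs

lemma noadj_ftN {β t'} : ¬ LTree.Adjoin β ftN t' := by
  intro h; rcases adj_inv h with ⟨n, h1, _⟩ | ⟨pre, u, post, u', hcs, _, _⟩
  · simp [ftN] at h1
  · simp at hcs

lemma noadj_ta {β t'} : ¬ LTree.Adjoin β ta t' := by
  intro h; rcases adj_inv h with ⟨n, h1, _⟩ | ⟨pre, u, post, u', hcs, hu, _⟩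
  · simp [ta] at h1
  · obtain ⟨rfl, rfl, rfl⟩ := split1 hcs.symm; exact noadj_aLeaf hu

lemma noadj_tc {β t'} : ¬ LTree.Adjoin β tc t' := by
  intro h; rcases adj_inv h with ⟨n, h1, _⟩ | ⟨pre, u, post, u', hcs, hu, _⟩
  · simp [tc] at h1
  · obtain ⟨rfl, rfl, rfl⟩ := split1 hcs.symm; exact noadj_cLeaf hu

lemma noadj_XA {x β t'} (hx : XA x) : ¬ LTree.Adjoin β x t' := by
  rcases hx with rfl | rfl
  · exact noadj_lA
  · exact noadj_ta

lemma noadj_XC {y β t'} (hy : XC y) : ¬ LTree.Adjoin β y t' := by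
  rcases hy with rfl | rfl
  · exact noadj_lC
  · exact noadj_tc

lemma noadj_gpart : ∀ k {β t'}, ¬ LTree.Adjoin β (gpart k) t' := by
  intro k
  induction k with
  | zero =>
    intro β t' h
    rcases adj_inv h with ⟨n, h1, _⟩ | ⟨pre, u, post, u', hcs, hu, _⟩
    · simp at h1
    · obtain ⟨rfl, rfl, rfl⟩ := split1 hcs.symm; exact noadj_bLeaf hu
  | succ k ih =>
    intro β t' h
    rcases adj_inv h with ⟨n, h1, _⟩ | ⟨pre, u, post, u', hcs, hu, _⟩
    · simp at h1
    · rcases split2 hcs.symm with ⟨rfl, rfl, rfl⟩ | ⟨rfl, rfl, rfl⟩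
      · exact ih hu
      · exact noadj_bLeaf hu

lemma noadj_fpart : ∀ k {β t'}, ¬ LTree.Adjoin β (fpart k) t' := by
  intro k
  induction k with
  | zero => intro β t' h; exact noadj_ftN h
  | succ k ih =>
    intro β t' h
    rcases adj_inv h with ⟨n, h1, _⟩ | ⟨pre, u, post, u', hcs, hu, _⟩
    · simp at h1
    · rcases split2 hcs.symm with ⟨rfl, rfl, rfl⟩ | ⟨rfl, rfl, rfl⟩
      · exact ih hu
      · exact noadj_bLeaf hu

end Cnt
namespace Cnt

open LTree


lemma fr_fpart_f {l : ℕ} : ∀ e {t'}, FootReplace () (fpart l) (fpart e) t' → t' = fpart (e + l) := by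
  intro e
  induction e with
  | zero =>
    intro t' h
    rcases fr_inv h with ⟨_, _, rfl⟩ | ⟨pre, u, post, u', hcs, hu, _⟩
    · simp [Nat.zero_add]
    · simp [fpart, ftN] at hcs
  | succ e ih =>
    intro t' h
    rcases fr_inv (by exact h) with ⟨h1, _⟩ | ⟨pre, u, post, u', hcs, hu, rfl⟩
    · simp [fpart] at h1
    · rcases split2 hcs.symm with ⟨rfl, rfl, rfl⟩ | ⟨rfl, rfl, rfl⟩
      · rw [ih hu, show e + 1 + l = (e + l) + 1 from by omega]; rfl
      · exact absurd hu nofr_bLeaf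

lemma fr_fpart_g {d : ℕ} : ∀ e {t'}, FootReplace () (gpart d) (fpart e) t' → t' = gpart (e + d) := by
  intro e
  induction e with
  | zero =>
    intro t' h
    rcases fr_inv h with ⟨_, _, rfl⟩ | ⟨pre, u, post, u', hcs, hu, _⟩
    · simp [Nat.zero_add]
    · simp [fpart, ftN] at hcs
  | succ e ih =>
    intro t' h
    rcases fr_inv (by exact h) with ⟨h1, _⟩ | ⟨pre, u, post, u', hcs, hu, rfl⟩
    · simp [fpart] at h1
    · rcases split2 hcs.symm with ⟨rfl, rfl, rfl⟩ | ⟨rfl, rfl, rfl⟩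
      · rw [ih hu, show e + 1 + d = (e + d) + 1 from by omega]; rfl
      · exact absurd hu nofr_bLeaf

lemma fr_midF_f {l : ℕ} : ∀ {e m m'}, MidF e m → FootReplace () (fpart l) m m' →
    MidF (e + l) m' := by
  intro e m m' hm
  induction hm generalizing m' with
  | core k =>
    intro h
    rcases fr_inv h with ⟨h1, _⟩ | ⟨pre, u, post, u', hcs, hu, rfl⟩
    · simp at h1
    · rcases split2 hcs.symm with ⟨rfl, rfl, rfl⟩ | ⟨rfl, rfl, rfl⟩
      · rw [fr_fpart_f _ hu]; exact MidF.core _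
      · exact absurd hu nofr_bLeaf
  | @wrap k x m y hx hy hm ih =>
    intro h
    rcases fr_inv h with ⟨h1, _⟩ | ⟨pre, u, post, u', hcs, hu, rfl⟩
    · simp at h1
    · rcases split3 hcs.symm with ⟨rfl, rfl, rfl⟩ | ⟨rfl, rfl, rfl⟩ | ⟨rfl, rfl, rfl⟩
      · exact absurd hu (nofr_XA hx)
      · have := ih hu
        rw [show k + 1 + l = (k + l) + 1 from by omega] at this
        exact MidF.wrap hx hy this
      · exact absurd hu (nofr_XC hy)

lemma fr_midF_g {d : ℕ} : ∀ {e m m'}, MidF e m → FootReplace () (gpart d) m m' →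
    MidG (e + d + 1) m' := by
  intro e m m' hm
  induction hm generalizing m' with
  | core k =>
    intro h
    rcases fr_inv h with ⟨h1, _⟩ | ⟨pre, u, post, u', hcs, hu, rfl⟩
    · simp at h1
    · rcases split2 hcs.symm with ⟨rfl, rfl, rfl⟩ | ⟨rfl, rfl, rfl⟩
      · rw [fr_fpart_g _ hu]; exact MidG.core _
      · exact absurd hu nofr_bLeaf
  | @wrap k x m y hx hy hm ih =>
    intro h
    rcases fr_inv h with ⟨h1, _⟩ | ⟨pre, u, post, u', hcs, hu, rfl⟩
    · simp at h1
    · rcases split3 hcs.symm with ⟨rfl, rfl, rfl⟩ | ⟨rfl, rfl, rfl⟩ | ⟨rfl, rfl, rfl⟩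
      · exact absurd hu (nofr_XA hx)
      · have := ih hu
        rw [show k + 1 + d + 1 = (k + d + 1) + 1 from by omega] at this
        exact MidG.wrap hx hy this
      · exact absurd hu (nofr_XC hy)

lemma inv_anode {β : CL} (h : Inv β) {n : Unit} (hr : rootLabel β = .anode n) :
    ∃ x m y, XA x ∧ MidF 0 m ∧ XC y ∧ β = .node (.anode ()) [x, m, y] := by
  rcases h with rfl | rfl | ⟨x, m, y, hx, hm, hy, rfl⟩ | ⟨x, m, y, hx, hm, hy, rfl⟩
  · simp [ta, rootLabel] at hr
  · simp [tc, rootLabel] at hr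
  · exact ⟨x, m, y, hx, hm, hy, rfl⟩
  · simp [rootLabel] at hr

lemma inv_nonterm1 {β : CL} (h : Inv β) (hr : rootLabel β = .nonterm 1) : β = ta := by
  rcases h with rfl | rfl | ⟨x, m, y, hx, hm, hy, rfl⟩ | ⟨x, m, y, hx, hm, hy, rfl⟩
  · rfl
  · simp [tc, rootLabel] at hr
  · simp [rootLabel] at hr
  · simp [rootLabel] at hr

lemma inv_nonterm2 {β : CL} (h : Inv β) (hr : rootLabel β = .nonterm 2) : β = tc := by
  rcases h with rfl | rfl | ⟨x, m, y, hx, hm, hy, rfl⟩ | ⟨x, m, y, hx, hm, hy, rfl⟩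
  · simp [ta, rootLabel] at hr
  · rfl
  · simp [rootLabel] at hr
  · simp [rootLabel] at hr

end Cnt
namespace Cnt
open LTree

lemma adj_midF {β : CL} (hβ : Inv β) : ∀ {k m m'}, MidF k m → Adjoin β m m' →
    MidF k m' := by
  intro k m m' hm
  induction hm generalizing m' with
  | core j =>
    intro h
    rcases adj_inv h with ⟨n, h1, hroot, hfr⟩ | ⟨pre, u, post, u', hcs, hu, rfl⟩
    · obtain ⟨x, mb, y, hx, hmb, hy, rfl⟩ := inv_anode hβ hroot
      have hplug : (.node (.anode n) [fpart j, bLeaf] : CL) = fpart (j + 1) := rfl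
      rw [hplug] at hfr
      rcases fr_inv hfr with ⟨h2, _⟩ | ⟨pre, u, post, u', hcs, hu, rfl⟩
      · simp at h2
      · rcases split3 hcs.symm with ⟨rfl, rfl, rfl⟩ | ⟨rfl, rfl, rfl⟩ | ⟨rfl, rfl, rfl⟩
        · exact absurd hu (nofr_XA hx)
        · have := fr_midF_f hmb hu
          rw [Nat.zero_add] at this
          exact MidF.wrap hx hy this
        · exact absurd hu (nofr_XC hy)
    · rcases split2 hcs.symm with ⟨rfl, rfl, rfl⟩ | ⟨rfl, rfl, rfl⟩
      · exact absurd hu (noadj_fpart j)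
      · exact absurd hu noadj_bLeaf
  | @wrap k x m y hx hy hm ih =>
    intro h
    rcases adj_inv h with ⟨n, h1, hroot, hfr⟩ | ⟨pre, u, post, u', hcs, hu, rfl⟩
    · simp at h1
    · rcases split3 hcs.symm with ⟨rfl, rfl, rfl⟩ | ⟨rfl, rfl, rfl⟩ | ⟨rfl, rfl, rfl⟩
      · exact absurd hu (noadj_XA hx)
      · exact MidF.wrap hx hy (ih hu)
      · exact absurd hu (noadj_XC hy)

lemma adj_midG {β : CL} (hβ : Inv β) : ∀ {k m m'}, MidG k m → Adjoin β m m' →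
    MidG k m' := by
  intro k m m' hm
  induction hm generalizing m' with
  | base =>
    intro h
    rcases adj_inv h with ⟨n, h1, hroot, hfr⟩ | ⟨pre, u, post, u', hcs, hu, rfl⟩
    · obtain ⟨x, mb, y, hx, hmb, hy, rfl⟩ := inv_anode hβ hroot
      have hplug : (.node (.anode n) [bLeaf] : CL) = gpart 0 := rfl
      rw [hplug] at hfr
      rcases fr_inv hfr with ⟨h2, _⟩ | ⟨pre, u, post, u', hcs, hu, rfl⟩
      · simp at h2
      · rcases split3 hcs.symm with ⟨rfl, rfl, rfl⟩ | ⟨rfl, rfl, rfl⟩ | ⟨rfl, rfl, rfl⟩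
        · exact absurd hu (nofr_XA hx)
        · exact MidG.wrap hx hy (fr_midF_g hmb hu)
        · exact absurd hu (nofr_XC hy)
    · rcases split1 hcs.symm with ⟨rfl, rfl, rfl⟩
      exact absurd hu noadj_bLeaf
  | core j =>
    intro h
    rcases adj_inv h with ⟨n, h1, hroot, hfr⟩ | ⟨pre, u, post, u', hcs, hu, rfl⟩
    · obtain ⟨x, mb, y, hx, hmb, hy, rfl⟩ := inv_anode hβ hroot
      have hplug : (.node (.anode n) [gpart j, bLeaf] : CL) = gpart (j + 1) := rfl
      rw [hplug] at hfr
      rcases fr_inv hfr with ⟨h2, _⟩ | ⟨pre, u, post, u', hcs, hu, rfl⟩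
      · simp at h2
      · rcases split3 hcs.symm with ⟨rfl, rfl, rfl⟩ | ⟨rfl, rfl, rfl⟩ | ⟨rfl, rfl, rfl⟩
        · exact absurd hu (nofr_XA hx)
        · have := fr_midF_g hmb hu
          rw [Nat.zero_add] at this
          exact MidG.wrap hx hy this
        · exact absurd hu (nofr_XC hy)
    · rcases split2 hcs.symm with ⟨rfl, rfl, rfl⟩ | ⟨rfl, rfl, rfl⟩
      · exact absurd hu (noadj_gpart j)
      · exact absurd hu noadj_bLeaf
  | @wrap k x m y hx hy hm ih =>
    intro h
    rcases adj_inv h with ⟨n, h1, hroot, hfr⟩ | ⟨pre, u, post, u', hcs, hu, rfl⟩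
    · simp at h1
    · rcases split3 hcs.symm with ⟨rfl, rfl, rfl⟩ | ⟨rfl, rfl, rfl⟩ | ⟨rfl, rfl, rfl⟩
      · exact absurd hu (noadj_XA hx)
      · exact MidG.wrap hx hy (ih hu)
      · exact absurd hu (noadj_XC hy)

lemma rs_XA {β : CL} {A : Fin 3} {x x' : CL} (hβ : Inv β) (hx : XA x)
    (h : ReplaceSubst β A x x') : x' = ta := by
  rcases hx with rfl | rfl
  · rcases rs_inv h with ⟨h1, _, hroot, rfl⟩ | ⟨pre, u, post, u', hcs, hu, rfl⟩
    · have : A = 1 := by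
        cases h1; rfl
      subst this
      exact inv_nonterm1 hβ hroot
    · simp [lA] at hcs
  · exact absurd h nors_ta

lemma rs_XC {β : CL} {A : Fin 3} {y y' : CL} (hβ : Inv β) (hy : XC y)
    (h : ReplaceSubst β A y y') : y' = tc := by
  rcases hy with rfl | rfl
  · rcases rs_inv h with ⟨h1, _, hroot, rfl⟩ | ⟨pre, u, post, u', hcs, hu, rfl⟩
    · have : A = 2 := by
        cases h1; rfl
      subst this
      exact inv_nonterm2 hβ hroot
    · simp [lC] at hcs
  · exact absurd h nors_tc

lemma rs_midF {β : CL} {A : Fin 3} (hβ : Inv β) : ∀ {k m m'}, MidF k m →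
    ReplaceSubst β A m m' → MidF k m' := by
  intro k m m' hm
  induction hm generalizing m' with
  | core j =>
    intro h
    rcases rs_inv h with ⟨h1, _⟩ | ⟨pre, u, post, u', hcs, hu, rfl⟩
    · simp at h1
    · rcases split2 hcs.symm with ⟨rfl, rfl, rfl⟩ | ⟨rfl, rfl, rfl⟩
      · exact absurd hu (nors_fpart j)
      · exact absurd hu nors_bLeaf
  | @wrap k x m y hx hy hm ih =>
    intro h
    rcases rs_inv h with ⟨h1, _⟩ | ⟨pre, u, post, u', hcs, hu, rfl⟩
    · simp at h1
    · rcases split3 hcs.symm with ⟨rfl, rfl, rfl⟩ | ⟨rfl, rfl, rfl⟩ | ⟨rfl, rfl, rfl⟩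
      · rw [rs_XA hβ hx hu]; exact MidF.wrap (Or.inr rfl) hy hm
      · exact MidF.wrap hx hy (ih hu)
      · rw [rs_XC hβ hy hu]; exact MidF.wrap hx (Or.inr rfl) hm

lemma rs_midG {β : CL} {A : Fin 3} (hβ : Inv β) : ∀ {k m m'}, MidG k m →
    ReplaceSubst β A m m' → MidG k m' := by
  intro k m m' hm
  induction hm generalizing m' with
  | base =>
    intro h
    rcases rs_inv h with ⟨h1, _⟩ | ⟨pre, u, post, u', hcs, hu, rfl⟩
    · simp at h1
    · rcases split1 hcs.symm with ⟨rfl, rfl, rfl⟩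
      exact absurd hu nors_bLeaf
  | core j =>
    intro h
    rcases rs_inv h with ⟨h1, _⟩ | ⟨pre, u, post, u', hcs, hu, rfl⟩
    · simp at h1
    · rcases split2 hcs.symm with ⟨rfl, rfl, rfl⟩ | ⟨rfl, rfl, rfl⟩
      · exact absurd hu (nors_gpart j)
      · exact absurd hu nors_bLeaf
  | @wrap k x m y hx hy hm ih =>
    intro h
    rcases rs_inv h with ⟨h1, _⟩ | ⟨pre, u, post, u', hcs, hu, rfl⟩
    · simp at h1
    · rcases split3 hcs.symm with ⟨rfl, rfl, rfl⟩ | ⟨rfl, rfl, rfl⟩ | ⟨rfl, rfl, rfl⟩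
      · rw [rs_XA hβ hx hu]; exact MidG.wrap (Or.inr rfl) hy hm
      · exact MidG.wrap hx hy (ih hu)
      · rw [rs_XC hβ hy hu]; exact MidG.wrap hx (Or.inr rfl) hm

lemma derived_inv : ∀ {t : CL}, G.Derived t → Inv t := by
  intro t h
  induction h with
  | init ht =>
    simp only [G, Set.mem_insert_iff, Set.mem_singleton_iff] at ht
    rcases ht with rfl | rfl | rfl
    · exact Or.inr (Or.inr (Or.inr ⟨lA, _, lC, Or.inl rfl, MidG.base, Or.inl rfl, rfl⟩))
    · exact Or.inl rfl
    · exact Or.inr (Or.inl rfl)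
  | auxMem ht =>
    simp only [G, Set.mem_singleton_iff] at ht
    subst ht
    exact Or.inr (Or.inr (Or.inl ⟨lA, _, lC, Or.inl rfl, MidF.core 0, Or.inl rfl, rfl⟩))
  | subst A h1 h2 h3 ih1 ih2 =>
    rcases ih1 with rfl | rfl | ⟨x, m, y, hx, hm, hy, rfl⟩ | ⟨x, m, y, hx, hm, hy, rfl⟩
    · exact absurd h3 nors_ta
    · exact absurd h3 nors_tc
    · rcases rs_inv h3 with ⟨hl, _⟩ | ⟨pre, u, post, u', hcs, hu, rfl⟩
      · simp at hl
      · rcases split3 hcs.symm with ⟨rfl, rfl, rfl⟩ | ⟨rfl, rfl, rfl⟩ | ⟨rfl, rfl, rfl⟩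
        · exact Or.inr (Or.inr (Or.inl ⟨_, _, _, (rs_XA ih2 hx hu) ▸ Or.inr rfl, hm, hy, rfl⟩))
        · exact Or.inr (Or.inr (Or.inl ⟨_, _, _, hx, rs_midF ih2 hm hu, hy, rfl⟩))
        · exact Or.inr (Or.inr (Or.inl ⟨_, _, _, hx, hm, (rs_XC ih2 hy hu) ▸ Or.inr rfl, rfl⟩))
    · rcases rs_inv h3 with ⟨hl, _⟩ | ⟨pre, u, post, u', hcs, hu, rfl⟩
      · simp at hl
      · rcases split3 hcs.symm with ⟨rfl, rfl, rfl⟩ | ⟨rfl, rfl, rfl⟩ | ⟨rfl, rfl, rfl⟩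
        · exact Or.inr (Or.inr (Or.inr ⟨_, _, _, (rs_XA ih2 hx hu) ▸ Or.inr rfl, hm, hy, rfl⟩))
        · exact Or.inr (Or.inr (Or.inr ⟨_, _, _, hx, rs_midG ih2 hm hu, hy, rfl⟩))
        · exact Or.inr (Or.inr (Or.inr ⟨_, _, _, hx, hm, (rs_XC ih2 hy hu) ▸ Or.inr rfl, rfl⟩))
  | adjoin h1 h2 h3 ih1 ih2 =>
    rcases ih1 with rfl | rfl | ⟨x, m, y, hx, hm, hy, rfl⟩ | ⟨x, m, y, hx, hm, hy, rfl⟩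
    · exact absurd h3 noadj_ta
    · exact absurd h3 noadj_tc
    · rcases adj_inv h3 with ⟨n, hl, _⟩ | ⟨pre, u, post, u', hcs, hu, rfl⟩
      · simp at hl
      · rcases split3 hcs.symm with ⟨rfl, rfl, rfl⟩ | ⟨rfl, rfl, rfl⟩ | ⟨rfl, rfl, rfl⟩
        · exact absurd hu (noadj_XA hx)
        · exact Or.inr (Or.inr (Or.inl ⟨_, _, _, hx, adj_midF ih2 hm hu, hy, rfl⟩))
        · exact absurd hu (noadj_XC hy)
    · rcases adj_inv h3 with ⟨n, hl, _⟩ | ⟨pre, u, post, u', hcs, hu, rfl⟩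
      · simp at hl
      · rcases split3 hcs.symm with ⟨rfl, rfl, rfl⟩ | ⟨rfl, rfl, rfl⟩ | ⟨rfl, rfl, rfl⟩
        · exact absurd hu (noadj_XA hx)
        · exact Or.inr (Or.inr (Or.inr ⟨_, _, _, hx, adj_midG ih2 hm hu, hy, rfl⟩))
        · exact absurd hu (noadj_XC hy)

end Cnt
namespace Cnt
open LTree

@[simp] lemma yields_nil : yields ([] : List CL) = [] := by rw [yields]
@[simp] lemma yields_cons (t : CL) (ts : List CL) :
    yields (t :: ts) = yield t ++ yields ts := by rw [yields]
@[simp] lemma yield_node (l : Lab (Fin 3) (Fin 3) Unit) (cs : List CL) :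
    yield (.node l cs) = match l with
      | .term a => [a]
      | _ => yields cs := by
  cases l <;> rw [yield]

@[simp] lemma yield_aLeaf : yield aLeaf = [0] := by simp [aLeaf]
@[simp] lemma yield_bLeaf : yield bLeaf = [1] := by simp [bLeaf]
@[simp] lemma yield_cLeaf : yield cLeaf = [2] := by simp [cLeaf]
@[simp] lemma yield_ta : yield ta = [0] := by simp [ta]
@[simp] lemma yield_tc : yield tc = [2] := by simp [tc]

lemma yield_gpart : ∀ k, yield (gpart k) = List.replicate (k + 1) (1 : Fin 3) := by
  intro k
  induction k with
  | zero => simp [gpart]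
  | succ k ih =>
    simp [gpart, ih]
    rw [← List.replicate_succ', List.replicate_succ]

@[simp] lemma completeList_nil : CompleteList ([] : List CL) := by rw [CompleteList]; trivial
lemma completeList_cons {t : CL} {ts : List CL} :
    CompleteList (t :: ts) ↔ Complete t ∧ CompleteList ts := by rw [CompleteList]

lemma complete_term (a : Fin 3) : Complete (.node (.term a) ([] : List CL)) := by
  rw [Complete]

@[simp] lemma complete_aLeaf : Complete aLeaf := complete_term 0
@[simp] lemma complete_bLeaf : Complete bLeaf := complete_term 1
@[simp] lemma complete_cLeaf : Complete cLeaf := complete_term 2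

lemma complete_nonterm {A : Fin 3} {cs : List CL} :
    Complete (.node (.nonterm A) cs) ↔ cs ≠ [] ∧ CompleteList cs := by rw [Complete]
lemma complete_anode {n : Unit} {cs : List CL} :
    Complete (.node (.anode n) cs) ↔ cs ≠ [] ∧ CompleteList cs := by rw [Complete]
lemma complete_adj {n : Unit} {cs : List CL} :
    Complete (.node (.adj n) cs) ↔ cs ≠ [] ∧ CompleteList cs := by rw [Complete]
@[simp] lemma not_complete_substLeaf {A : Fin 3} {cs : List CL} :
    ¬ Complete (.node (.substLeaf A) cs) := by rw [Complete]; exact id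
@[simp] lemma not_complete_foot {n : Unit} {cs : List CL} :
    ¬ Complete (.node (.foot n) cs) := by rw [Complete]; exact id

@[simp] lemma complete_ta : Complete ta := by
  rw [ta, complete_nonterm]
  exact ⟨by simp, by simp [completeList_cons]⟩
@[simp] lemma complete_tc : Complete tc := by
  rw [tc, complete_nonterm]
  exact ⟨by simp, by simp [completeList_cons]⟩

@[simp] lemma complete_gpart : ∀ k, Complete (gpart k) := by
  intro k
  induction k with
  | zero =>
    rw [gpart, complete_anode]
    exact ⟨by simp, by simp [completeList_cons]⟩
  | succ k ih =>
    rw [gpart, complete_anode]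
    exact ⟨by simp, by simp [completeList_cons, ih]⟩

/-- yield of complete middles -/
lemma yield_midG : ∀ {k m}, MidG k m → Complete m →
    ∃ d, yield m = List.replicate d (0 : Fin 3) ++
      List.replicate (d + k + 1) (1 : Fin 3) ++ List.replicate d (2 : Fin 3) := by
  intro k m hm
  induction hm with
  | base => intro _; exact ⟨0, by simp⟩
  | core j =>
    intro _
    exact ⟨0, by simp [yield_gpart]; rw [← List.replicate_succ', List.replicate_succ]⟩
  | @wrap k x m y hx hy hm ih =>
    intro hc
    rw [complete_anode] at hc
    obtain ⟨-, hc⟩ := hc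
    rw [completeList_cons] at hc
    obtain ⟨hcx, hc⟩ := hc
    rw [completeList_cons] at hc
    obtain ⟨hcm, hc⟩ := hc
    rw [completeList_cons] at hc
    obtain ⟨hcy, -⟩ := hc
    have hxa : x = ta := by
      rcases hx with rfl | rfl
      · exact absurd hcx (by rw [lA]; exact not_complete_substLeaf)
      · rfl
    have hyc : y = tc := by
      rcases hy with rfl | rfl
      · exact absurd hcy (by rw [lC]; exact not_complete_substLeaf)
      · rfl
    subst hxa hyc
    obtain ⟨d, hd⟩ := ih hcm
    refine ⟨d + 1, ?_⟩
    rw [show (d + 1) + k + 1 = d + (k + 1) + 1 from by omega,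
      List.replicate_succ (n := d) (a := (0 : Fin 3)),
      List.replicate_succ' (n := d) (a := (2 : Fin 3))]
    simp [hd]

end Cnt
namespace Cnt
open LTree

def coreT : ℕ → CL
  | 0 => .node (.adj ()) [bLeaf]
  | j + 1 => .node (.adj ()) [gpart j, bLeaf]

def wrapIter : ℕ → CL → CL
  | 0, t => t
  | w + 1, t => .node (.anode ()) [ta, wrapIter w t, tc]

def mg (d : ℕ) : CL := wrapIter d (coreT d)

def sTree (d : ℕ) : CL := .node (.nonterm 0) [ta, mg d, tc]

def betaFull : CL := .node (.anode ()) [ta, .node (.adj ()) [ftN, bLeaf], tc]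

lemma derived_ta : G.Derived ta := LTAG0.Derived.init (by simp [G])
lemma derived_tc : G.Derived tc := LTAG0.Derived.init (by simp [G])
lemma derived_alpha : G.Derived alphaT := LTAG0.Derived.init (by simp [G])
lemma derived_beta : G.Derived betaT := LTAG0.Derived.auxMem (by simp [G])

lemma derived_betaFull : G.Derived betaFull := by
  have h1 : ReplaceSubst ta 1 betaT
      (.node (.anode ()) [ta, .node (.adj ()) [ftN, bLeaf], lC]) :=
    ReplaceSubst.step _ [] [.node (.adj ()) [ftN, bLeaf], lC] (ReplaceSubst.here rfl)
  have h2 : ReplaceSubst tc 2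
      (.node (.anode ()) [ta, .node (.adj ()) [ftN, bLeaf], lC]) betaFull :=
    ReplaceSubst.step _ [ta, .node (.adj ()) [ftN, bLeaf]] [] (ReplaceSubst.here rfl)
  exact LTAG0.Derived.subst 2
    (LTAG0.Derived.subst 1 derived_beta derived_ta h1) derived_tc h2

lemma derived_sTree0 : G.Derived (sTree 0) := by
  have h1 : ReplaceSubst ta 1 alphaT
      (.node (.nonterm 0) [ta, .node (.adj ()) [bLeaf], lC]) :=
    ReplaceSubst.step _ [] [.node (.adj ()) [bLeaf], lC] (ReplaceSubst.here rfl)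
  have h2 : ReplaceSubst tc 2
      (.node (.nonterm 0) [ta, .node (.adj ()) [bLeaf], lC]) (sTree 0) :=
    ReplaceSubst.step _ [ta, .node (.adj ()) [bLeaf]] [] (ReplaceSubst.here rfl)
  exact LTAG0.Derived.subst 2
    (LTAG0.Derived.subst 1 derived_alpha derived_ta h1) derived_tc h2

lemma fr_betaFull (d : ℕ) :
    FootReplace () (gpart d) betaFull (.node (.anode ()) [ta, coreT (d + 1), tc]) :=
  FootReplace.step _ [ta] [tc] (FootReplace.step _ [] [bLeaf] FootReplace.here)

lemma adj_coreT (d : ℕ) :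
    Adjoin betaFull (coreT d) (.node (.anode ()) [ta, coreT (d + 1), tc]) := by
  cases d with
  | zero => exact Adjoin.here () [bLeaf] rfl (fr_betaFull 0)
  | succ j => exact Adjoin.here () [gpart j, bLeaf] rfl (fr_betaFull (j + 1))

lemma adj_wrapIter {u u' : CL} (h : Adjoin betaFull u u') :
    ∀ w, Adjoin betaFull (wrapIter w u) (wrapIter w u') := by
  intro w
  induction w with
  | zero => exact h
  | succ w ih => exact Adjoin.step _ [ta] [tc] ih

lemma wrapIter_shift (u : CL) : ∀ w,
    wrapIter w (.node (.anode ()) [ta, u, tc]) = wrapIter (w + 1) u := by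
  intro w
  induction w with
  | zero => rfl
  | succ w ih =>
    show LTree.node _ _ = LTree.node _ _
    rw [ih]

lemma adj_mg (d : ℕ) : Adjoin betaFull (mg d) (mg (d + 1)) := by
  have := adj_wrapIter (adj_coreT d) d
  rwa [wrapIter_shift] at this

lemma adj_sTree (d : ℕ) : Adjoin betaFull (sTree d) (sTree (d + 1)) :=
  Adjoin.step _ [ta] [tc] (adj_mg d)

lemma derived_sTree : ∀ d, G.Derived (sTree d) := by
  intro d
  induction d with
  | zero => exact derived_sTree0
  | succ d ih => exact LTAG0.Derived.adjoin ih derived_betaFull (adj_sTree d)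

lemma complete_coreT (d : ℕ) : Complete (coreT d) := by
  cases d with
  | zero =>
    rw [coreT, complete_adj]
    exact ⟨by simp, by simp [completeList_cons]⟩
  | succ j =>
    rw [coreT, complete_adj]
    exact ⟨by simp, by simp [completeList_cons]⟩

lemma complete_wrapIter {u : CL} (hu : Complete u) : ∀ w, Complete (wrapIter w u) := by
  intro w
  induction w with
  | zero => exact hu
  | succ w ih =>
    rw [wrapIter, complete_anode]
    exact ⟨by simp, by simp [completeList_cons, ih]⟩

lemma complete_sTree (d : ℕ) : Complete (sTree d) := by
  rw [sTree, complete_nonterm]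
  exact ⟨by simp, by simp [completeList_cons, mg, complete_wrapIter (complete_coreT d) d]⟩

lemma yield_coreT (d : ℕ) : yield (coreT d) = List.replicate (d + 1) (1 : Fin 3) := by
  cases d with
  | zero => simp [coreT]
  | succ j =>
    simp [coreT, yield_gpart]
    rw [← List.replicate_succ', List.replicate_succ]

lemma yield_wrapIter (u : CL) : ∀ w, yield (wrapIter w u) =
    List.replicate w (0 : Fin 3) ++ yield u ++ List.replicate w (2 : Fin 3) := by
  intro w
  induction w with
  | zero => simp [wrapIter]
  | succ w ih =>
    rw [List.replicate_succ (n := w) (a := (0 : Fin 3)),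
      List.replicate_succ' (n := w) (a := (2 : Fin 3))]
    show yield (.node (.anode ()) [ta, wrapIter w u, tc]) = _
    simp [ih]

lemma yield_sTree (d : ℕ) : yield (sTree d) =
    List.replicate (d + 1) (0 : Fin 3) ++ List.replicate (d + 1) (1 : Fin 3) ++
      List.replicate (d + 1) (2 : Fin 3) := by
  rw [List.replicate_succ (n := d) (a := (0 : Fin 3)),
    List.replicate_succ' (n := d) (a := (2 : Fin 3))]
  show yield (.node (.nonterm 0) [ta, mg d, tc]) = _
  simp [mg, yield_wrapIter, yield_coreT]

end Cnt
namespace Cnt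
open LTree

@[simp] lemma termCounts_nil : termCounts ([] : List CL) = 0 := by rw [termCounts]
@[simp] lemma termCounts_cons (t : CL) (ts : List CL) :
    termCounts (t :: ts) = termCount t + termCounts ts := by rw [termCounts]
@[simp] lemma termCount_node (l : Lab (Fin 3) (Fin 3) Unit) (cs : List CL) :
    termCount (.node l cs) = match l with
      | .term _ => 1
      | _ => termCounts cs := by
  cases l <;> rw [termCount]

@[simp] lemma footCounts_nil : footCounts ([] : List CL) = 0 := by rw [footCounts]
@[simp] lemma footCounts_cons (t : CL) (ts : List CL) :
    footCounts (t :: ts) = footCount t + footCounts ts := by rw [footCounts]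
@[simp] lemma footCount_node (l : Lab (Fin 3) (Fin 3) Unit) (cs : List CL) :
    footCount (.node l cs) = match l with
      | .foot _ => 1 + footCounts cs
      | _ => footCounts cs := by
  cases l <;> rw [footCount]

lemma subtree_inv {s : CL} {l : Lab (Fin 3) (Fin 3) Unit} {cs : List CL}
    (h : Subtree s (.node l cs)) : s = .node l cs ∨ ∃ u ∈ cs, Subtree s u := by
  cases h with
  | refl => exact Or.inl rfl
  | child l cs hmem hsub => exact Or.inr ⟨_, hmem, hsub⟩

lemma subtree_leaf {s : CL} {l : Lab (Fin 3) (Fin 3) Unit}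
    (h : Subtree s (.node l [])) : s = .node l [] := by
  rcases subtree_inv h with rfl | ⟨v, hv, _⟩
  · rfl
  · simp at hv

lemma wf : G.WellFormed := by
  refine ⟨?_, ?_, ?_, ?_, ?_, ?_⟩
  · exact ((Set.finite_singleton tc).insert ta).insert alphaT
  · exact Set.finite_singleton betaT
  · intro t ht
    simp only [G, Set.mem_union, Set.mem_insert_iff, Set.mem_singleton_iff] at ht
    rcases ht with (rfl | rfl | rfl) | rfl <;>
      simp [alphaT, ta, tc, betaT, lA, lC, aLeaf, bLeaf, cLeaf, ftN]
  · intro t ht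
    simp only [G, Set.mem_insert_iff, Set.mem_singleton_iff] at ht
    rcases ht with rfl | rfl | rfl
    · exact ⟨⟨0, rfl⟩, by simp [alphaT, lA, lC, bLeaf]⟩
    · exact ⟨⟨1, rfl⟩, by simp [ta, aLeaf]⟩
    · exact ⟨⟨2, rfl⟩, by simp [tc, cLeaf]⟩
  · intro t ht
    simp only [G, Set.mem_singleton_iff] at ht
    subst ht
    refine ⟨(), rfl, by simp [betaT, lA, lC, bLeaf, ftN], ?_⟩
    intro u _ m _
    exact Subsingleton.elim m ()
  · intro t ht
    simp only [G, Set.mem_union, Set.mem_insert_iff, Set.mem_singleton_iff] at ht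
    rcases ht with (rfl | rfl | rfl) | rfl
    · rintro u hu ⟨n, hn⟩
      simp only [alphaT] at hu
      rcases subtree_inv hu with rfl | ⟨v, hv, h2⟩
      · simp [rootLabel] at hn
      · simp only [List.mem_cons, List.not_mem_nil, or_false] at hv
        rcases hv with rfl | rfl | rfl
        · simp only [lA] at h2
          rw [subtree_leaf h2] at hn
          simp [rootLabel] at hn
        · rcases subtree_inv h2 with rfl | ⟨w, hw, h3⟩
          · simp [bLeaf]
          · simp only [List.mem_cons, List.not_mem_nil, or_false] at hw
            subst hw
            simp only [bLeaf] at h3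
            rw [subtree_leaf h3] at hn
            simp [rootLabel] at hn
        · simp only [lC] at h2
          rw [subtree_leaf h2] at hn
          simp [rootLabel] at hn
    · rintro u hu ⟨n, hn⟩
      simp only [ta] at hu
      rcases subtree_inv hu with rfl | ⟨v, hv, h2⟩
      · simp [rootLabel] at hn
      · simp only [List.mem_cons, List.not_mem_nil, or_false] at hv
        subst hv
        simp only [aLeaf] at h2
        rw [subtree_leaf h2] at hn
        simp [rootLabel] at hn
    · rintro u hu ⟨n, hn⟩
      simp only [tc] at hu
      rcases subtree_inv hu with rfl | ⟨v, hv, h2⟩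
      · simp [rootLabel] at hn
      · simp only [List.mem_cons, List.not_mem_nil, or_false] at hv
        subst hv
        simp only [cLeaf] at h2
        rw [subtree_leaf h2] at hn
        simp [rootLabel] at hn
    · rintro u hu ⟨n, hn⟩
      simp only [betaT] at hu
      rcases subtree_inv hu with rfl | ⟨v, hv, h2⟩
      · simp [rootLabel] at hn
      · simp only [List.mem_cons, List.not_mem_nil, or_false] at hv
        rcases hv with rfl | rfl | rfl
        · simp only [lA] at h2
          rw [subtree_leaf h2] at hn
          simp [rootLabel] at hn
        · rcases subtree_inv h2 with rfl | ⟨w, hw, h3⟩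
          · simp [ftN, bLeaf]
          · simp only [List.mem_cons, List.not_mem_nil, or_false] at hw
            rcases hw with rfl | rfl
            · simp only [ftN] at h3
              rw [subtree_leaf h3] at hn
              simp [rootLabel] at hn
            · simp only [bLeaf] at h3
              rw [subtree_leaf h3] at hn
              simp [rootLabel] at hn
        · simp only [lC] at h2
          rw [subtree_leaf h2] at hn
          simp [rootLabel] at hn

lemma language_eq : G.language = {x : List (Fin 3) | ∃ n : ℕ, 1 ≤ n ∧
    x = List.replicate n (0 : Fin 3) ++ List.replicate n 1 ++ List.replicate n 2} := by
  ext w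
  simp only [LTAG0.language, Set.mem_setOf_eq]
  constructor
  · rintro ⟨t, hd, hroot, hc, rfl⟩
    have hinv := derived_inv hd
    rcases hinv with rfl | rfl | ⟨x, m, y, hx, hm, hy, rfl⟩ | ⟨x, m, y, hx, hm, hy, rfl⟩
    · rw [ta] at hroot
      simp only [rootLabel, G] at hroot
      exact absurd (Lab.nonterm.inj hroot) (by decide)
    · rw [tc] at hroot
      simp only [rootLabel, G] at hroot
      exact absurd (Lab.nonterm.inj hroot) (by decide)
    · simp [rootLabel, G] at hroot
    · rw [complete_nonterm] at hc
      obtain ⟨-, hc⟩ := hc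
      rw [completeList_cons] at hc
      obtain ⟨hcx, hc⟩ := hc
      rw [completeList_cons] at hc
      obtain ⟨hcm, hc⟩ := hc
      rw [completeList_cons] at hc
      obtain ⟨hcy, -⟩ := hc
      have hxa : x = ta := by
        rcases hx with rfl | rfl
        · exact absurd hcx (by rw [lA]; exact not_complete_substLeaf)
        · rfl
      have hyc : y = tc := by
        rcases hy with rfl | rfl
        · exact absurd hcy (by rw [lC]; exact not_complete_substLeaf)
        · rfl
      subst hxa hyc
      obtain ⟨d, hd'⟩ := yield_midG hm hcm
      refine ⟨d + 1, by omega, ?_⟩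
      rw [List.replicate_succ (n := d) (a := (0 : Fin 3)),
        List.replicate_succ' (n := d) (a := (2 : Fin 3))]
      simp [hd']
  · rintro ⟨n, hn, rfl⟩
    obtain ⟨d, rfl⟩ : ∃ d, n = d + 1 := ⟨n - 1, by omega⟩
    exact ⟨sTree d, derived_sTree d, rfl, complete_sTree d, yield_sTree d⟩

end Cnt
/-- There exists a well-formed LTAG₀ grammar (with adjunction nodes restricted
to the path from the lexical leaf to the root) generating the
counting-dependency language { aⁿ bⁿ cⁿ : n ≥ 1 }. -/
theorem exists_ltag0_counting :
    ∃ (NS NA : Type) (g : LTAG0 (Fin 3) NS NA), g.WellFormed ∧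
      g.language = {x | ∃ n : ℕ, 1 ≤ n ∧
        x = List.replicate n (0 : Fin 3) ++ List.replicate n 1 ++ List.replicate n 2} := by
  exact ⟨Fin 3, Unit, Cnt.G, Cnt.wf, Cnt.language_eq⟩
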